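/- The series Σ_{m=1}^{∞} (5m)!/((m!)^5 · 5^{5m}) converges (the sequence m ↦ (5m)!/((m!)^5 · 5^{5m}) is summable). Consequently, the expected number of returns to the origin of the random walk with steps uniform on the fifth roots of unity is finite, i.e. the walk is transient. -/

import Mathlib

noncomputable def aa (m : ℕ) : ℝ :=
  (Nat.factorial (5 * (m + 1)) : ℝ) /
    ((Nat.factorial (m + 1) : ℝ) ^ 5 * 5 ^ (5 * (m + 1)))

lemma facAdd5 (n : ℕ) : ((n+5).factorial : ℝ)
    = ((n:ℝ)+5)*((n:ℝ)+4)*((n:ℝ)+3)*((n:ℝ)+2)*((n:ℝ)+1)*(n.factorial : ℝ) := by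
  have h : (n+5).factorial = (n+5)*((n+4)*((n+3)*((n+2)*((n+1)*n.factorial)))) := rfl
  rw [h]; push_cast; ring

lemma aa_pos (m : ℕ) : 0 < aa m := by
  unfold aa; positivity

lemma aa_succ (m : ℕ) : aa (m+1) = aa m *
    (((5*(m:ℝ)+10)*(5*(m:ℝ)+9)*(5*(m:ℝ)+8)*(5*(m:ℝ)+7)*(5*(m:ℝ)+6)) /
      (((m:ℝ)+2)^5 * 5^5)) := by
  unfold aa
  have h1 : 5 * (m + 1 + 1) = (5*m+5) + 5 := by ring
  have h2 : 5 * (m + 1) = 5*m+5 := by ring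
  have hf2 : (((m+1+1).factorial : ℕ) : ℝ) = ((m:ℝ)+2) * (((m+1).factorial : ℕ) : ℝ) := by
    rw [show m+1+1 = (m+1)+1 from rfl, Nat.factorial_succ]; push_cast; ring
  rw [h1, h2, facAdd5, hf2]
  have hf : ((5*m+5 : ℕ).factorial : ℝ) ≠ 0 := by positivity
  have hg : ((m+1 : ℕ).factorial : ℝ) ≠ 0 := by positivity
  have h5 : (5:ℝ) ^ ((5*m+5)+5) = 5 ^ (5*m+5) * 5^5 := by rw [pow_add]
  push_cast [h5]
  have hm2 : ((m:ℝ)+2) ≠ 0 := by positivity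
  field_simp
  ring

lemma key (x : ℝ) (hx : 5 ≤ x) :
    ((x+1)*(x+2)*(x+3)*(x+4))^2 ≤ x^3*(x+5)^5 := by
  nlinarith [sq_nonneg x, sq_nonneg (x-5), pow_nonneg (by linarith : (0:ℝ) ≤ x) 3,
    pow_nonneg (by linarith : (0:ℝ) ≤ x) 4, pow_nonneg (by linarith : (0:ℝ) ≤ x) 5,
    mul_nonneg (by linarith : (0:ℝ) ≤ x - 5) (pow_nonneg (by linarith : (0:ℝ) ≤ x) 6),
    mul_nonneg (by linarith : (0:ℝ) ≤ x - 5) (pow_nonneg (by linarith : (0:ℝ) ≤ x) 3),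
    mul_nonneg (by linarith : (0:ℝ) ≤ x - 5) (pow_nonneg (by linarith : (0:ℝ) ≤ x) 2)]

lemma step (m : ℕ) : aa (m+1)^2 * ((m:ℝ)+2)^3 ≤ aa m ^2 * ((m:ℝ)+1)^3 := by
  rw [aa_succ, mul_pow]
  set y := (m:ℝ) with hy
  have hQ : (((5*y+10)*(5*y+9)*(5*y+8)*(5*y+7)*(5*y+6)) / ((y+2)^5 * 5^5))^2 * (y+2)^3
      ≤ (y+1)^3 := by
    rw [div_pow, div_mul_eq_mul_div, div_le_iff₀ (by positivity)]
    have hy0 : (0:ℝ) ≤ y := Nat.cast_nonneg m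
    have key' := key (5*y+5) (by linarith)
    calc ((5*y+10)*(5*y+9)*(5*y+8)*(5*y+7)*(5*y+6))^2 * (y+2)^3
        = ((5*y+5+1)*(5*y+5+2)*(5*y+5+3)*(5*y+5+4))^2 * (25*(y+2)^5) := by ring
      _ ≤ (5*y+5)^3*(5*y+5+5)^5 * (25*(y+2)^5) :=
          mul_le_mul_of_nonneg_right key' (by positivity)
      _ = (y+1)^3 * (((y+2)^5*5^5)^2) := by ring
  calc aa m ^2 * (((5*y+10)*(5*y+9)*(5*y+8)*(5*y+7)*(5*y+6)) / ((y+2)^5 * 5^5))^2 * (y+2)^3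
      = aa m ^2 * ((((5*y+10)*(5*y+9)*(5*y+8)*(5*y+7)*(5*y+6)) / ((y+2)^5 * 5^5))^2 * (y+2)^3) := by
        ring
    _ ≤ aa m ^2 * (y+1)^3 := mul_le_mul_of_nonneg_left hQ (sq_nonneg _)

lemma bound (m : ℕ) : aa m ^ 2 * ((m:ℝ)+1)^3 ≤ (24/625)^2 := by
  induction m with
  | zero =>
    have h0 : aa 0 = 24/625 := by
      unfold aa
      norm_num [show Nat.factorial 5 = 120 from rfl, show Nat.factorial 1 = 1 from rfl]
    rw [h0]; norm_num
  | succ n ih =>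
    have hc : ((n+1:ℕ):ℝ) = (n:ℝ)+1 := by push_cast; ring
    rw [hc, show (n:ℝ)+1+1 = (n:ℝ)+2 by ring]
    exact le_trans (step n) ih

lemma bound2 (m : ℕ) : aa m ≤ (24/625) * (1 / ((m:ℝ)+1) ^ ((3:ℝ)/2)) := by
  have ht : (0:ℝ) < ((m:ℝ)+1) ^ ((3:ℝ)/2) := Real.rpow_pos_of_pos (by positivity) _
  rw [mul_one_div, le_div_iff₀ ht]
  have hsq : (aa m * ((m:ℝ)+1) ^ ((3:ℝ)/2))^2 ≤ (24/625)^2 := by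
    have h3 : (((m:ℝ)+1) ^ ((3:ℝ)/2))^2 = ((m:ℝ)+1)^3 := by
      rw [← Real.rpow_natCast (((m:ℝ)+1) ^ ((3:ℝ)/2)) 2,
        ← Real.rpow_mul (by positivity)]
      norm_num
    rw [mul_pow, h3]
    exact bound m
  have h1 : aa m * ((m:ℝ)+1) ^ ((3:ℝ)/2)
      = Real.sqrt ((aa m * ((m:ℝ)+1) ^ ((3:ℝ)/2))^2) := by
    rw [Real.sqrt_sq (mul_nonneg (aa_pos m).le ht.le)]
  rw [h1]
  calc Real.sqrt ((aa m * ((m:ℝ)+1) ^ ((3:ℝ)/2))^2) ≤ Real.sqrt ((24/625)^2) :=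
        Real.sqrt_le_sqrt hsq
    _ = 24/625 := Real.sqrt_sq (by norm_num)

lemma summable_aa : Summable aa := by
  have hs : Summable (fun n : ℕ => 1/(n:ℝ)^((3:ℝ)/2)) :=
    Real.summable_one_div_nat_rpow.mpr (by norm_num)
  have hs1 : Summable (fun m : ℕ => 1/((m:ℝ)+1)^((3:ℝ)/2)) := by
    have h := (summable_nat_add_iff 1).mpr hs
    refine h.congr fun m => ?_
    push_cast
    ring_nf
  have hs2 : Summable (fun m : ℕ => (24/625) * (1/((m:ℝ)+1)^((3:ℝ)/2))) := hs1.mul_left _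
  exact hs2.of_nonneg_of_le (fun m => (aa_pos m).le) bound2

/-- the series Σ_{m≥1} (5m)!/((m!)⁵·5^{5m}) converges, i.e. the sequence of
return probabilities of the random walk with steps uniform on the fifth roots of unity is
summable; hence the expected number of returns to the origin is finite and the walk is
transient. -/
theorem summable_return_probabilities_N5 :
    Summable (fun m : ℕ =>
      (Nat.factorial (5 * (m + 1)) : ℝ) /
        ((Nat.factorial (m + 1) : ℝ) ^ 5 * 5 ^ (5 * (m + 1)))) := by
  exact summable_aa
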